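/- Let p̃⁻ = r ⋉ (m⁻)^a and let F_K^k(U(p̃⁻)*) = { f : f(U_{k−1}(p̃⁻)) = 0 } be the generalized Kostant filtration. Define ψ_k : F_K^k(U(p̃⁻)*) → S_k(p⁻)* by ψ_k(f)(s s') = f(s θ(s')) for s ∈ S_j(m⁻), s' ∈ S_{k−j}(r), 0 ≤ j ≤ k, where θ : S(r) → U(r) is symmetrization. Then ψ_k is a surjective linear map with kernel exactly F_K^{k+1}(U(p̃⁻)*); hence it induces a linear isomorphism gr_K^k(U(p̃⁻)*) = F_K^k/F_K^{k+1} ≅ S_k(p⁻)*. -/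
import Mathlib


namespace Stmt13

variable {k : Type*} [Field k] {U : Type*} [AddCommGroup U] [Module k U]

/-- The generalized Kostant filtration `F_K^n = {f ∈ U* : f(U_{n−1}) = 0}` attached to an
(increasing) filtration `Ufil` of `U` (with `U_{−1} = 0`). -/
def FKgen (Ufil : ℕ → Submodule k U) : ℕ → Submodule k (Module.Dual k U)
  | 0 => (⊥ : Submodule k U).dualAnnihilator
  | n + 1 => (Ufil n).dualAnnihilator

/-- Auxiliary form of the Kostant-map statement, with the "previous filtration step"
abstracted as a plain submodule `V`. -/
theorem kostant_aux
    {S : Type*} [AddCommGroup S] [Module k S]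
    (Ufil : ℕ → Submodule k U) (n : ℕ) (V : Submodule k U)
    (hFKn : FKgen Ufil n = V.dualAnnihilator)
    (incl : S →ₗ[k] U) (hinj : Function.Injective incl)
    (hinf : LinearMap.range incl ⊓ V = ⊥)
    (hsup : LinearMap.range incl ⊔ V = Ufil n) :
    (∀ f : Module.Dual k U, f ∈ FKgen Ufil n →
      ((f ∘ₗ incl : Module.Dual k S) = 0 ↔ f ∈ FKgen Ufil (n + 1))) ∧
    (∀ g : Module.Dual k S, ∃ f ∈ FKgen Ufil n, (f ∘ₗ incl : Module.Dual k S) = g) := by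
  have hFK : ∀ f : Module.Dual k U, f ∈ FKgen Ufil n ↔ ∀ x ∈ V, f x = 0 := by
    intro f; rw [hFKn]; simp [Submodule.mem_dualAnnihilator]
  have hFK1 : ∀ f : Module.Dual k U, f ∈ FKgen Ufil (n + 1) ↔ ∀ x ∈ Ufil n, f x = 0 := by
    intro f; simp [FKgen, Submodule.mem_dualAnnihilator]
  have hrange : LinearMap.range incl ≤ Ufil n := by
    rw [← hsup]; exact le_sup_left
  -- the combined map `S × V → U`
  set π : S × V →ₗ[k] U := incl.coprod V.subtype with hπdef
  have hπ : Function.Injective π := by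
    rw [← LinearMap.ker_eq_bot, Submodule.eq_bot_iff]
    rintro ⟨s, v⟩ h
    have h' : incl s + (v : U) = 0 := h
    have hs : incl s ∈ LinearMap.range incl ⊓ V := by
      refine ⟨⟨s, rfl⟩, ?_⟩
      rw [eq_neg_of_add_eq_zero_left h']
      exact V.neg_mem v.2
    rw [hinf, Submodule.mem_bot] at hs
    have hs0 : s = 0 := hinj (by simpa using hs)
    have hv0 : (v : U) = 0 := by rw [hs0] at h'; simpa using h'
    simp [Prod.ext_iff, hs0, Subtype.ext_iff, hv0]
  -- a splitting projection `p : U → S` with `p ∘ incl = id` and `p(V) = 0`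
  set e : (S × V) ≃ₗ[k] LinearMap.range π := LinearEquiv.ofInjective π hπ with he
  obtain ⟨p, hp⟩ :=
    ((LinearMap.fst k S V) ∘ₗ (e.symm : LinearMap.range π →ₗ[k] S × V)).exists_extend
  have hps : ∀ s : S, p (incl s) = s := by
    intro s
    have h1 : π (s, 0) = incl s := by simp [hπdef]
    have h2 : ((e (s, 0) : LinearMap.range π) : U) = incl s := by
      rw [he]; simpa using h1
    calc p (incl s) = p ((LinearMap.range π).subtype (e (s, 0))) := by
          rw [Submodule.coe_subtype, h2]
      _ = ((LinearMap.fst k S V) ∘ₗ (e.symm : LinearMap.range π →ₗ[k] S × V)) (e (s, 0)) := by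
          rw [← hp]; rfl
      _ = s := by simp
  have hpv : ∀ x ∈ V, p x = 0 := by
    intro x hx
    have h1 : π (0, ⟨x, hx⟩) = x := by simp [hπdef]
    have h2 : ((e (0, ⟨x, hx⟩) : LinearMap.range π) : U) = x := by
      rw [he]; simpa using h1
    calc p x = p ((LinearMap.range π).subtype (e (0, ⟨x, hx⟩))) := by
          rw [Submodule.coe_subtype, h2]
      _ = ((LinearMap.fst k S V) ∘ₗ (e.symm : LinearMap.range π →ₗ[k] S × V)) (e (0, ⟨x, hx⟩)) := by
          rw [← hp]; rfl
      _ = 0 := by simp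
  constructor
  · intro f hf
    have hfV := (hFK f).mp hf
    constructor
    · intro h0
      rw [hFK1]
      intro x hx
      rw [← hsup] at hx
      obtain ⟨y, ⟨s, rfl⟩, z, hz, rfl⟩ := Submodule.mem_sup.mp hx
      have h1 : f (incl s) = 0 := by simpa using LinearMap.ext_iff.mp h0 s
      rw [map_add, h1, hfV z hz, add_zero]
    · intro h1
      ext s
      exact (hFK1 f).mp h1 (incl s) (hrange ⟨s, rfl⟩)
  · intro g
    refine ⟨g ∘ₗ p, (hFK _).mpr fun x hx => ?_, ?_⟩
    · simp [hpv x hx]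
    · ext s; simp [hps s]

/-- **The Kostant map `ψ_k` is surjective with kernel `F_K^{k+1}`.**
Here `U = U(p̃⁻)` with its canonical filtration `Ufil`, and `S` stands for
`S_k(p⁻) ≅ ⊕_{j=0}^{k} S_j(m⁻) ⊗ S_{k−j}(r)`; the linear map `incl : S → U` is
`s·s' ↦ s·θ(s')` (`θ` the symmetrization of `S(r)` into `U(r)`), which by
Poincaré–Birkhoff–Witt identifies `S` with a complement
`⊕_{j=0}^{k} S_j(m⁻) ⊗ θ(S_{k−j}(r))` of `U_{k−1}(p̃⁻)` in `U_k(p̃⁻)` (hypotheses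
`hinj`, `hinf`, `hsup`).  The Kostant map `ψ_k : F_K^k → S_k(p⁻)*`,
`ψ_k(f) = f ∘ incl`, is surjective with kernel exactly `F_K^{k+1}`; hence it induces a
linear isomorphism `gr_K^k(U(p̃⁻)*) = F_K^k/F_K^{k+1} ≅ S_k(p⁻)*`. -/
theorem kostant_map_surjective_kernel
    {S : Type*} [AddCommGroup S] [Module k S]
    (Ufil : ℕ → Submodule k U) (hmono : Monotone Ufil) (n : ℕ)
    (incl : S →ₗ[k] U) (hinj : Function.Injective incl)
    (hinf : LinearMap.range incl ⊓ (match n with | 0 => ⊥ | j + 1 => Ufil j) = ⊥)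
    (hsup : LinearMap.range incl ⊔ (match n with | 0 => ⊥ | j + 1 => Ufil j) = Ufil n) :
    -- the kernel of `ψ_n` on `F_K^n` is exactly `F_K^{n+1}` …
    (∀ f : Module.Dual k U, f ∈ FKgen Ufil n →
      ((f ∘ₗ incl : Module.Dual k S) = 0 ↔ f ∈ FKgen Ufil (n + 1))) ∧
    -- … and `ψ_n : F_K^n → S_n(p⁻)*` is surjective.
    (∀ g : Module.Dual k S, ∃ f ∈ FKgen Ufil n, (f ∘ₗ incl : Module.Dual k S) = g) := by
  cases n with
  | zero => exact kostant_aux Ufil 0 ⊥ rfl incl hinj hinf hsup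
  | succ j => exact kostant_aux Ufil (j + 1) (Ufil j) rfl incl hinj hinf hsup
end Stmt13
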